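/- Let H be Hermitian, P a Hermitian matrix with P² = I, |φ_0⟩ a unit vector, θ ~ N(0,σ²), and U(θ) = cos(θ)I − i sin(θ)P. Then E_θ[⟨φ_0|U(θ)†HU(θ)|φ_0⟩] = α⟨φ_0|H|φ_0⟩ + β⟨φ_0|PHP|φ_0⟩ with α = (1+e^{−2σ²})/2 and β = (1−e^{−2σ²})/2. -/

import Mathlib

open Matrix MeasureTheory ProbabilityTheory BigOperators

noncomputable section

open scoped NNReal ENNReal Real

/-- Pauli-rotation unitary `U(θ) = cos(θ)I − i sin(θ)P`. -/
def pauliRot {D : ℕ} (P : Matrix (Fin D) (Fin D) ℂ) (θ : ℝ) :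
    Matrix (Fin D) (Fin D) ℂ :=
  (Real.cos θ : ℂ) • (1 : Matrix (Fin D) (Fin D) ℂ)
    - (Complex.I * Real.sin θ) • P

lemma aux_integrable_cexp_gauss (v : ℝ≥0) :
    Integrable (fun θ : ℝ => Complex.exp (2 * Complex.I * θ)) (gaussianReal 0 v) := by
  apply Integrable.mono' (integrable_const (1:ℝ))
  · exact (Complex.measurable_exp.comp
      ((measurable_const.mul Complex.measurable_ofReal))).aestronglyMeasurable
  · refine Filter.Eventually.of_forall fun θ => ?_
    have : 2 * Complex.I * θ = (2*θ:ℝ) * Complex.I := by push_cast; ring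
    rw [this]
    simp [Complex.norm_exp]

lemma aux_integral_cexp_gauss (v : ℝ≥0) :
    ∫ θ : ℝ, Complex.exp (2 * Complex.I * θ) ∂(gaussianReal 0 v)
      = Complex.exp (-2 * v) := by
  by_cases hv : v = 0
  · simp [hv, gaussianReal_zero_var]
  · rw [gaussianReal_of_var_ne_zero _ hv]
    rw [show gaussianPDF 0 v = fun x => ((gaussianPDFReal 0 v x).toNNReal : ℝ≥0∞) from rfl]
    rw [integral_withDensity_eq_integral_smul ((measurable_gaussianPDFReal 0 v).real_toNNReal)]
    have hv' : (0:ℝ) < (v:ℝ) := lt_of_le_of_ne (v.coe_nonneg) (by exact_mod_cast (Ne.symm hv))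
    have hb : (-(1/(2*(v:ℂ)))).re < 0 := by
      rw [show (2*(v:ℂ)) = ((2*(v:ℝ) : ℝ) : ℂ) by push_cast; ring]
      rw [show (1 : ℂ) / ((2*(v:ℝ) : ℝ) : ℂ) = (((2*(v:ℝ))⁻¹ : ℝ) : ℂ) by push_cast; ring]
      simp only [Complex.neg_re, Complex.ofReal_re, neg_neg]
      simp only [neg_lt, neg_zero]
      positivity
    have hsmul : ∀ x : ℝ, (gaussianPDFReal 0 v x).toNNReal • Complex.exp (2 * Complex.I * x)
        = ((Real.sqrt (2 * π * (v:ℝ)))⁻¹ : ℂ) *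
          Complex.exp ((-(1/(2*(v:ℂ)))) * x^2 + (2*Complex.I) * x + 0) := by
      intro x
      have h1 : ((gaussianPDFReal 0 v x).toNNReal : ℝ) = gaussianPDFReal 0 v x :=
        Real.coe_toNNReal _ (gaussianPDFReal_nonneg 0 v x)
      rw [NNReal.smul_def, h1]
      have harg2 : (-(1/(2*(v:ℂ))) * x^2 + 2*Complex.I*x + 0)
          = ((-(x-0)^2/(2*(v:ℝ)) : ℝ) : ℂ) + 2*Complex.I*(x:ℂ) := by
        have hvne : (v:ℂ) ≠ 0 := by exact_mod_cast hv
        push_cast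
        field_simp
        ring
      rw [harg2, Complex.exp_add, ← Complex.ofReal_exp, gaussianPDFReal,
        Complex.real_smul]
      push_cast
      ring
    simp_rw [hsmul]
    rw [integral_const_mul, integral_cexp_quadratic hb]
    have harg : (0 - (2*Complex.I)^2 / (4 * (-(1/(2*(v:ℂ)))))) = -2*(v:ℂ) := by
      have : (v:ℂ) ≠ 0 := by exact_mod_cast hv
      field_simp
      rw [Complex.I_sq]; ring
    rw [harg]
    have hpow : ((π:ℂ) / -(-(1/(2*(v:ℂ))))) ^ (1/2 : ℂ) = (Real.sqrt (2 * π * (v:ℝ)) : ℂ) := by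
      have : (π:ℂ) / -(-(1/(2*(v:ℂ)))) = ((2 * π * (v:ℝ) : ℝ) : ℂ) := by
        have hvne : (v:ℂ) ≠ 0 := by exact_mod_cast hv
        push_cast
        field_simp
      rw [this, show (1/2:ℂ) = ((1/2:ℝ):ℂ) by norm_num,
        ← Complex.ofReal_cpow (by positivity), ← Real.sqrt_eq_rpow]
    rw [hpow]
    have hne : (Real.sqrt (2 * π * (v:ℝ)) : ℂ) ≠ 0 := by
      exact_mod_cast Complex.ofReal_ne_zero.mpr (by positivity)
    rw [← mul_assoc, inv_mul_cancel₀ hne, one_mul]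

lemma aux_integrable_cos_gauss (v : ℝ≥0) :
    Integrable (fun θ : ℝ => Real.cos (2*θ)) (gaussianReal 0 v) := by
  apply Integrable.mono' (integrable_const (1:ℝ))
  · exact (Real.continuous_cos.comp (continuous_const.mul continuous_id)).aestronglyMeasurable
  · exact Filter.Eventually.of_forall fun θ => by
      simpa using Real.abs_cos_le_one (2*θ)

lemma aux_integrable_sin_gauss (v : ℝ≥0) :
    Integrable (fun θ : ℝ => Real.sin (2*θ)) (gaussianReal 0 v) := by
  apply Integrable.mono' (integrable_const (1:ℝ))
  · exact (Real.continuous_sin.comp (continuous_const.mul continuous_id)).aestronglyMeasurable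
  · exact Filter.Eventually.of_forall fun θ => by
      simpa using Real.abs_sin_le_one (2*θ)

lemma aux_integral_cos_gauss (v : ℝ≥0) :
    ∫ θ : ℝ, Real.cos (2*θ) ∂(gaussianReal 0 v) = Real.exp (-2*(v:ℝ)) := by
  have h1 : ∀ θ : ℝ, Real.cos (2*θ) = (Complex.exp (2 * Complex.I * θ)).re := by
    intro θ
    rw [show 2 * Complex.I * θ = ((2*θ:ℝ):ℂ) * Complex.I by push_cast; ring]
    rw [Complex.exp_ofReal_mul_I_re]
  simp_rw [h1]
  rw [show (fun θ : ℝ => (Complex.exp (2 * Complex.I * θ)).re)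
      = fun θ : ℝ => RCLike.re (Complex.exp (2 * Complex.I * θ)) from rfl]
  rw [integral_re (aux_integrable_cexp_gauss v), RCLike.re_eq_complex_re,
    aux_integral_cexp_gauss v,
    show (-2 * (v:ℂ)) = ((-2*(v:ℝ):ℝ):ℂ) by push_cast; ring, ← Complex.ofReal_exp,
    Complex.ofReal_re]

lemma aux_integral_sin_gauss (v : ℝ≥0) :
    ∫ θ : ℝ, Real.sin (2*θ) ∂(gaussianReal 0 v) = 0 := by
  have h1 : ∀ θ : ℝ, Real.sin (2*θ) = (Complex.exp (2 * Complex.I * θ)).im := by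
    intro θ
    rw [show 2 * Complex.I * θ = ((2*θ:ℝ):ℂ) * Complex.I by push_cast; ring]
    rw [Complex.exp_ofReal_mul_I_im]
  simp_rw [h1]
  rw [show (fun θ : ℝ => (Complex.exp (2 * Complex.I * θ)).im)
      = fun θ : ℝ => RCLike.im (Complex.exp (2 * Complex.I * θ)) from rfl]
  rw [integral_im (aux_integrable_cexp_gauss v), RCLike.im_eq_complex_im,
    aux_integral_cexp_gauss v,
    show (-2 * (v:ℂ)) = ((-2*(v:ℝ):ℝ):ℂ) by push_cast; ring, ← Complex.ofReal_exp,
    Complex.ofReal_im]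

lemma aux_pauliRot_conj {D : ℕ} (H P : Matrix (Fin D) (Fin D) ℂ) (hP : P.IsHermitian) (θ : ℝ) :
    (pauliRot P θ)ᴴ * H * pauliRot P θ
      = ((Real.cos θ : ℂ)^2) • H + ((Real.sin θ : ℂ)^2) • (P * H * P)
        + (Complex.I * Real.sin θ * Real.cos θ) • (P * H - H * P) := by
  have hPH : Pᴴ = P := hP
  simp only [pauliRot, conjTranspose_sub, conjTranspose_smul, conjTranspose_one, hPH,
    Matrix.sub_mul, Matrix.mul_sub, Matrix.smul_mul, Matrix.mul_smul, Matrix.one_mul,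
    Matrix.mul_one, smul_smul, smul_sub, sub_smul, star_mul', Complex.star_def,
    Complex.conj_I, Complex.conj_ofReal]
  rw [Matrix.mul_assoc]
  match_scalars <;> ring_nf <;> simp [Complex.I_sq]

/-- `E_θ[⟨φ₀|U(θ)†HU(θ)|φ₀⟩] = α⟨φ₀|H|φ₀⟩ + β⟨φ₀|PHP|φ₀⟩`
with `α = (1+e^{−2σ²})/2`, `β = (1−e^{−2σ²})/2`, `θ ~ N(0,σ²)`. -/
theorem expected_rotated_energy (D : ℕ)
    (H : Matrix (Fin D) (Fin D) ℂ) (hH : H.IsHermitian)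
    (P : Matrix (Fin D) (Fin D) ℂ) (hP : P.IsHermitian) (hP2 : P * P = 1)
    (φ0 : Fin D → ℂ) (hφ0 : star φ0 ⬝ᵥ φ0 = 1)
    (σ : NNReal) :
    (∫ θ, (star φ0 ⬝ᵥ ((pauliRot P θ)ᴴ * H * pauliRot P θ).mulVec φ0).re
        ∂(gaussianReal 0 (σ ^ 2)))
      = (1 + Real.exp (-2 * (σ : ℝ) ^ 2)) / 2 * (star φ0 ⬝ᵥ H.mulVec φ0).re
        + (1 - Real.exp (-2 * (σ : ℝ) ^ 2)) / 2
            * (star φ0 ⬝ᵥ (P * H * P).mulVec φ0).re := by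
  set A : ℝ := (star φ0 ⬝ᵥ H.mulVec φ0).re with hA
  set B : ℝ := (star φ0 ⬝ᵥ (P * H * P).mulVec φ0).re with hB
  set C : ℝ := (Complex.I * (star φ0 ⬝ᵥ (P * H - H * P).mulVec φ0)).re with hC
  have hpt : ∀ θ : ℝ, (star φ0 ⬝ᵥ ((pauliRot P θ)ᴴ * H * pauliRot P θ).mulVec φ0).re
      = (A+B)/2 + ((A-B)/2) * Real.cos (2*θ) + (C/2) * Real.sin (2*θ) := by
    intro θ
    rw [aux_pauliRot_conj H P hP θ]
    have hlin : star φ0 ⬝ᵥ (((Real.cos θ : ℂ)^2) • H + ((Real.sin θ : ℂ)^2) • (P * H * P)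
          + (Complex.I * Real.sin θ * Real.cos θ) • (P * H - H * P)).mulVec φ0
        = ((Real.cos θ^2 : ℝ) : ℂ) * (star φ0 ⬝ᵥ H.mulVec φ0)
          + ((Real.sin θ^2 : ℝ) : ℂ) * (star φ0 ⬝ᵥ (P * H * P).mulVec φ0)
          + ((Real.sin θ * Real.cos θ : ℝ) : ℂ)
              * (Complex.I * (star φ0 ⬝ᵥ (P * H - H * P).mulVec φ0)) := by
      simp only [Matrix.add_mulVec, Matrix.smul_mulVec, dotProduct_add,
        dotProduct_smul, smul_eq_mul]
      push_cast
      ring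
    rw [hlin]
    simp only [Complex.add_re, Complex.re_ofReal_mul, ← hA, ← hB, ← hC]
    rw [Real.cos_two_mul, Real.sin_two_mul]
    linear_combination B * Real.sin_sq_add_cos_sq θ
  calc (∫ θ, (star φ0 ⬝ᵥ ((pauliRot P θ)ᴴ * H * pauliRot P θ).mulVec φ0).re
        ∂(gaussianReal 0 (σ ^ 2)))
      = ∫ θ, ((A+B)/2 + ((A-B)/2) * Real.cos (2*θ) + (C/2) * Real.sin (2*θ))
          ∂(gaussianReal 0 (σ ^ 2)) := by
        exact integral_congr_ae (Filter.Eventually.of_forall hpt)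
    _ = (A+B)/2 + ((A-B)/2) * Real.exp (-2*((σ^2 : ℝ≥0):ℝ)) + (C/2) * 0 := by
        have i1 : Integrable (fun θ:ℝ => (A+B)/2 + ((A-B)/2) * Real.cos (2*θ))
            (gaussianReal 0 (σ^2)) :=
          (integrable_const _).add ((aux_integrable_cos_gauss _).const_mul _)
        have i2 : Integrable (fun θ:ℝ => (C/2) * Real.sin (2*θ)) (gaussianReal 0 (σ^2)) :=
          (aux_integrable_sin_gauss _).const_mul _
        have i3 : Integrable (fun θ:ℝ => ((A-B)/2) * Real.cos (2*θ))
            (gaussianReal 0 (σ^2)) :=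
          (aux_integrable_cos_gauss _).const_mul _
        rw [integral_add i1 i2, integral_add (integrable_const _) i3,
          integral_const, integral_const_mul, integral_const_mul,
          aux_integral_cos_gauss, aux_integral_sin_gauss]
        simp
    _ = (1 + Real.exp (-2 * (σ : ℝ) ^ 2)) / 2 * A
        + (1 - Real.exp (-2 * (σ : ℝ) ^ 2)) / 2 * B := by
        have : ((σ^2 : ℝ≥0):ℝ) = (σ:ℝ)^2 := by push_cast; ring
        rw [this]
        ring
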